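/- There exists a polynomial P in four variables with complex coefficients such that for all (x,y,z,w) ∈ ℂ⁴ with z ≠ 0, H(t; z(α₅−η−xz−yw), yz, 1/z, w/z) = P(x,y,z,w). In other words, the FST Hamiltonian H agrees with a polynomial function of the coordinates (x₃^{[01]}, y₃^{[01]}, z₃^{[01]}, w₃^{[01]}) = (−(q₁p₁+q₂p₂−α₅+η)p₁, q₂p₁, 1/p₁, p₂/p₁), whose inverse is (q₁,q₂,p₁,p₂) = (z(α₅−η−xz−yw), yz, 1/z, w/z). -/

import Mathlib

/-- The Painlevé VI-type Hamiltonian `H_VI(a,b,c,d;q,p)`. -/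
noncomputable def Hvi (t a b c d q p : ℂ) : ℂ :=
  (q * (q - 1) * (q - t) * p ^ 2 -
      (a * (q - 1) * (q - t) + b * q * (q - t) + (c - 1) * q * (q - 1)) * p + d * q) /
    (t * (t - 1))

/-- The Hamiltonian of the fourth-order FST Painlevé system. -/
noncomputable def HFST (α₀ α₁ α₂ α₃ α₄ α₅ η t q₁ q₂ p₁ p₂ : ℂ) : ℂ :=
  Hvi t (α₃ + α₅ - η) α₀ (α₂ + α₄) (α₁ * η) q₁ p₁ +
    Hvi t (α₁ + α₅ - η) (α₀ + α₂) α₄ (α₃ * η) q₂ p₂ +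
    (q₁ - 1) * (q₂ - t) * ((q₁ * p₁ + α₁) * p₂ + (q₂ * p₂ + α₃) * p₁) / (t * (t - 1))

set_option maxHeartbeats 1000000 in
set_option maxRecDepth 100000 in
open MvPolynomial in
/-- Auxiliary explicit polynomial for `HFST_polynomial_in_C3_01_coordinates`. -/
noncomputable def Paux (t α₁ α₂ α₃ α₄ α₅ η : ℂ) : MvPolynomial (Fin 4) ℂ :=
  C ((t*(t-1))⁻¹) * (
    C (η + (-1)*α₅ + (-1)*α₄*η + α₄*α₅ + (-1)*α₃*η + α₃*α₅ + (-1)*α₂*η + α₂*α₅ + (-1)*t*η + t*α₅ + t*α₅*η + (-1)*t*α₅^2 + t*α₄*η + (-1)*t*α₄*α₅ + t*α₃*η + (-1)*t*α₃*α₅ + t*α₂*η + (-1)*t*α₂*α₅ + t*α₁*η + (-1)*t*α₁*α₅) +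
    C ((-1)*t*η^2 + 2*t*α₅*η + (-1)*t*α₅^2 + t*α₁*η + (-1)*t*α₁*α₅) * (X 3) +
    C (α₅*η^2 + (-2)*α₅^2*η + α₅^3 + (-1)*α₁*α₅*η + α₁*α₅^2) * (X 2) +
    C ((-1)*α₃) * (X 1) +
    C ((-1)*η + α₅ + (-1)*α₃ + (-1)*α₂ + (-1)*t*η + t*α₅ + t*α₂ + t*α₁) * (X 1*X 3) +
    C ((-2)*t*η + 2*t*α₅ + t*α₁) * (X 1*X 3^2) +
    C (α₃*α₅) * (X 1*X 2) +
    C (2*α₅*η + (-2)*α₅^2 + (-1)*α₁*α₅) * (X 1*X 2*X 3) +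
    C ((-1)) * (X 1^2*X 3) +
    C ((-1) + (-1)*t) * (X 1^2*X 3^2) +
    C ((-1)*t) * (X 1^2*X 3^3) +
    C (α₅) * (X 1^2*X 2*X 3) +
    C (α₅) * (X 1^2*X 2*X 3^2) +
    C ((-1)*t) * (X 0) +
    C ((-1)*t) * (X 0*X 3) +
    C (1 + (-1)*η + α₅ + (-1)*α₄ + (-1)*α₃ + (-1)*α₂ + (-1)*t + (-1)*t*η + 2*t*α₅ + t*α₄ + t*α₃ + t*α₂ + t*α₁) * (X 0*X 2) +
    C ((-2)*t*η + 2*t*α₅ + t*α₁) * (X 0*X 2*X 3) +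
    C ((-1)*η^2 + 4*α₅*η + (-3)*α₅^2 + α₁*η + (-2)*α₁*α₅) * (X 0*X 2^2) +
    C ((-1) + (-1)*t) * (X 0*X 1*X 2*X 3) +
    C ((-2)*t) * (X 0*X 1*X 2*X 3^2) +
    C ((-1)*α₃) * (X 0*X 1*X 2^2) +
    C ((-2)*η + 4*α₅ + α₁) * (X 0*X 1*X 2^2*X 3) +
    C ((-1)) * (X 0*X 1^2*X 2^2*X 3) +
    C ((-1)) * (X 0*X 1^2*X 2^2*X 3^2) +
    C ((-1) + (-1)*t) * (X 0^2*X 2^2) +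
    C ((-1)*t) * (X 0^2*X 2^2*X 3) +
    C ((-2)*η + 3*α₅ + α₁) * (X 0^2*X 2^3) +
    C ((-2)) * (X 0^2*X 1*X 2^3*X 3) +
    C ((-1)) * (X 0^3*X 2^4))

set_option maxHeartbeats 2000000 in
set_option maxRecDepth 100000 in
/-- The FST Hamiltonian `H` is a polynomial function of the coordinates
`(x₃^{[01]}, y₃^{[01]}, z₃^{[01]}, w₃^{[01]}) = (−(q₁p₁+q₂p₂−α₅+η)p₁, q₂p₁, 1/p₁, p₂/p₁)`
resolving the accessible singularity `C₃^{(01)}`; the inverse change of variables is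
`(q₁,q₂,p₁,p₂) = (z(α₅−η−xz−yw), yz, 1/z, w/z)`. -/
theorem HFST_polynomial_in_C3_01_coordinates
    (t α₀ α₁ α₂ α₃ α₄ α₅ η : ℂ) (ht0 : t ≠ 0) (ht1 : t ≠ 1)
    (hsum : α₀ + α₁ + α₂ + α₃ + α₄ + α₅ = 1) :
    ∃ P : MvPolynomial (Fin 4) ℂ, ∀ x y z w : ℂ, z ≠ 0 →
      HFST α₀ α₁ α₂ α₃ α₄ α₅ η t (z * (α₅ - η - x * z - y * w)) (y * z) (1 / z) (w / z) =
        MvPolynomial.eval ![x, y, z, w] P := by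
  have ht1' : (t - 1) ≠ 0 := sub_ne_zero.mpr ht1
  have hα0 : α₀ = 1 - α₁ - α₂ - α₃ - α₄ - α₅ := by linear_combination hsum
  subst hα0
  refine ⟨Paux t α₁ α₂ α₃ α₄ α₅ η, ?_⟩
  intro x y z w hz
  simp only [Paux, map_add, map_mul, map_sub, map_pow, map_one, map_inv₀,
    MvPolynomial.eval_C, MvPolynomial.eval_X, Matrix.cons_val_zero, Matrix.cons_val_one,
    Matrix.head_cons, Matrix.cons_val_two, Matrix.cons_val_three, Matrix.tail_cons]
  rw [inv_mul_eq_div]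
  simp only [HFST, Hvi, ← add_div]
  rw [div_eq_div_iff (mul_ne_zero ht0 ht1') (mul_ne_zero ht0 ht1')]
  field_simp
  ring
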